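/- Let 0 ≤ θ₀ ≤ 1/2, θ₀ < θ ≤ 1, m > 1, let a ≥ 0 be measurable on (0,∞), and let the symmetric measurable kernel k satisfy hypothesis (K1) with constant k_*. Then for every r ∈ (1, m] and every nonnegative measurable ψ: ∫₀¹∫₁^∞ [w_r(x+y) − w_r(x) − w_r(y)]·k(x,y)ψ(x)ψ(y) dy dx ≤ 2^{r+2}·k_*·M₁(ψ)·∫₁^∞ y^r (1+a(y))^θ ψ(y) dy. -/
import Mathlib


open MeasureTheory Set Real
open scoped ENNReal

/-- The weight `ℓ`: `ℓ(x) = x^(1-2θ₀)` for `x ∈ (0,1)` and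
`ℓ(x) = (1+a(x))^θ · x^m` for `x > 1`. -/
noncomputable def ell (a : ℝ → ℝ) (θ₀ θ m : ℝ) (x : ℝ) : ℝ :=
  if x < 1 then x ^ (1 - 2 * θ₀) else (1 + a x) ^ θ * x ^ m

/-- The weight `w_r`: `w_r(x) = ((r−1)/2)x³` on `[0,1]` and
`w_r(x) = x^r + ((r−3)/2)x` for `x > 1`. -/
noncomputable def wgt (r x : ℝ) : ℝ :=
  if x ≤ 1 then ((r - 1) / 2) * x ^ 3 else x ^ r + ((r - 3) / 2) * x

/-- under (K1) with `θ₀ ∈ [0,1/2]`, for every `r ∈ (1,m]` and `ψ ≥ 0`,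
`∫₀¹∫₁^∞ [w_r(x+y) − w_r(x) − w_r(y)] k(x,y)ψ(x)ψ(y) dy dx ≤
  2^{r+2} k_* M₁(ψ) ∫₁^∞ y^r (1+a(y))^θ ψ(y) dy`. -/
theorem small_large_coag_estimate (a : ℝ → ℝ) (θ₀ θ m kstar r : ℝ)
    (k : ℝ → ℝ → ℝ) (ψ : ℝ → ℝ)
    (hθ₀0 : 0 ≤ θ₀) (hθ₀ : θ₀ ≤ 1 / 2) (hθ₀θ : θ₀ < θ) (hθ : θ ≤ 1) (hm : 1 < m)
    (ha : Measurable a) (ha0 : ∀ x ∈ Ioi (0 : ℝ), 0 ≤ a x)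
    (hkm : Measurable (Function.uncurry k))
    (hksym : ∀ x y : ℝ, 0 < x → 0 < y → k x y = k y x)
    (hknn : ∀ x y : ℝ, 0 < x → 0 < y → 0 ≤ k x y)
    (hkstar : 0 < kstar)
    (hK1 : ∀ x y : ℝ, 0 < x → 0 < y →
      k x y ≤ kstar * ell a θ₀ θ m x * ell a θ₀ θ m y / (x + y + (x + y) ^ m))
    (hr1 : 1 < r) (hrm : r ≤ m)
    (hψm : Measurable ψ) (hψ0 : ∀ x ∈ Ioi (0 : ℝ), 0 ≤ ψ x) :
    (∫⁻ x in Ioo (0 : ℝ) 1, ∫⁻ y in Ioi (1 : ℝ),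
        ENNReal.ofReal ((wgt r (x + y) - wgt r x - wgt r y) * (k x y * ψ x * ψ y))) ≤
      ENNReal.ofReal ((2 : ℝ) ^ (r + 2) * kstar) *
        (∫⁻ x in Ioi (0 : ℝ), ENNReal.ofReal (x * ψ x)) *
        ∫⁻ y in Ioi (1 : ℝ), ENNReal.ofReal (y ^ r * (1 + a y) ^ θ * ψ y) := by
  have h20 : (0:ℝ) < 2 := by norm_num
  have hr0 : (0:ℝ) < r := lt_trans one_pos hr1
  have h2r : (0:ℝ) < (2:ℝ) ^ r := Real.rpow_pos_of_pos h20 r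
  have hr2r : r ≤ (2:ℝ) ^ r := by
    have := one_add_mul_self_le_rpow_one_add (by norm_num : (-1:ℝ) ≤ 1) hr1.le
    norm_num at this
    linarith
  -- pointwise bound
  have key : ∀ x ∈ Ioo (0:ℝ) 1, ∀ y ∈ Ioi (1:ℝ),
      (wgt r (x + y) - wgt r x - wgt r y) * (k x y * ψ x * ψ y)
        ≤ ((2:ℝ) ^ (r+1) * kstar) * ((x * ψ x) * (y ^ r * (1 + a y) ^ θ * ψ y)) := by
    rintro x ⟨hx0, hx1⟩ y hy
    simp only [mem_Ioi] at hy
    have hy0 : (0:ℝ) < y := lt_trans one_pos hy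
    have hy1 : (1:ℝ) ≤ y := hy.le
    have hay : 0 ≤ a y := ha0 y hy0
    have hψx : 0 ≤ ψ x := hψ0 x hx0
    have hψy : 0 ≤ ψ y := hψ0 y hy0
    have hxy1 : (1:ℝ) < x + y := by linarith
    have hyr1 : (1:ℝ) ≤ y ^ r := Real.one_le_rpow hy1 hr0.le
    have hyrnn : (0:ℝ) ≤ y ^ r := by linarith
    -- bound on the weight difference
    have hdiff : wgt r (x + y) - wgt r x - wgt r y ≤ 2 ^ (r+1) * (x * y ^ r) := by
      rw [wgt, wgt, wgt, if_neg (not_le.mpr hxy1), if_pos hx1.le, if_neg (not_le.mpr hy)]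
      have ht0 : 0 ≤ x / y := div_nonneg hx0.le hy0.le
      have ht1 : x / y ≤ 1 := (div_le_one hy0).mpr (hx1.le.trans hy1)
      have hsplit : (x + y) ^ r = y ^ r * (1 + x / y) ^ r := by
        rw [← Real.mul_rpow hy0.le (by linarith)]
        congr 1
        field_simp
        ring
      have hconv : (1 + x / y) ^ r ≤ 1 + (x / y) * 2 ^ r := by
        have hcv := (convexOn_rpow hr1.le).2 (by norm_num : (1:ℝ) ∈ Ici (0:ℝ))
          (by norm_num : (2:ℝ) ∈ Ici (0:ℝ)) (by linarith : (0:ℝ) ≤ 1 - x / y) ht0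
          (by ring)
        simp only [smul_eq_mul] at hcv
        have he : (1 - x / y) * 1 + (x / y) * 2 = 1 + x / y := by ring
        rw [he, Real.one_rpow] at hcv
        nlinarith
      have h1 : (x + y) ^ r ≤ y ^ r + 2 ^ r * (x * y ^ r) := by
        have hA : y ^ r * (1 + x / y) ^ r ≤ y ^ r * (1 + (x / y) * 2 ^ r) :=
          mul_le_mul_of_nonneg_left hconv hyrnn
        have hB : x / y ≤ x := div_le_self hx0.le hy1
        rw [hsplit]
        nlinarith [mul_nonneg (mul_nonneg (sub_nonneg.mpr hB) hyrnn) h2r.le]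
      have h2 : ((r-3)/2) * x - ((r-1)/2) * x ^ 3 ≤ 2 ^ r * (x * y ^ r) := by
        have f1 : ((r-3)/2) * x ≤ 2 ^ r * x :=
          mul_le_mul_of_nonneg_right (by linarith) hx0.le
        have f2 : (2 ^ r * x) * 1 ≤ (2 ^ r * x) * y ^ r :=
          mul_le_mul_of_nonneg_left hyr1 (mul_nonneg h2r.le hx0.le)
        nlinarith [pow_nonneg hx0.le 3]
      have h3 : (2:ℝ) ^ (r+1) = 2 ^ r * 2 := by
        rw [Real.rpow_add h20, Real.rpow_one]
      rw [h3]
      nlinarith [h1, h2]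
    -- bound on the kernel
    have hk : k x y ≤ kstar * (1 + a y) ^ θ := by
      have hKx := hK1 x y hx0 hy0
      have hellx : ell a θ₀ θ m x ≤ 1 := by
        rw [ell, if_pos hx1]
        exact Real.rpow_le_one hx0.le hx1.le (by linarith)
      have helly : ell a θ₀ θ m y = (1 + a y) ^ θ * y ^ m := by
        rw [ell, if_neg (not_lt.mpr hy1)]
      have haθ : (0:ℝ) ≤ (1 + a y) ^ θ := Real.rpow_nonneg (by linarith) θ
      have hym : (0:ℝ) < y ^ m := Real.rpow_pos_of_pos hy0 m
      have hden : y ^ m ≤ x + y + (x + y) ^ m := by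
        have hd1 : y ^ m ≤ (x + y) ^ m :=
          Real.rpow_le_rpow hy0.le (by linarith) (by linarith)
        linarith
      calc k x y ≤ kstar * ell a θ₀ θ m x * ell a θ₀ θ m y / (x + y + (x + y) ^ m) := hKx
        _ ≤ kstar * 1 * ((1 + a y) ^ θ * y ^ m) / y ^ m := by
            apply div_le_div₀ (by positivity) ?_ hym hden
            rw [helly]
            exact mul_le_mul_of_nonneg_right
              (mul_le_mul_of_nonneg_left hellx hkstar.le) (by positivity)
        _ = kstar * (1 + a y) ^ θ := by
            rw [mul_one, mul_div_assoc, mul_div_assoc, div_self hym.ne', mul_one]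
    have hknn' : 0 ≤ k x y := hknn x y hx0 hy0
    have hkψ : 0 ≤ k x y * ψ x * ψ y := by positivity
    calc (wgt r (x+y) - wgt r x - wgt r y) * (k x y * ψ x * ψ y)
        ≤ (2 ^ (r+1) * (x * y ^ r)) * (k x y * ψ x * ψ y) :=
          mul_le_mul_of_nonneg_right hdiff hkψ
      _ ≤ (2 ^ (r+1) * (x * y ^ r)) * ((kstar * (1 + a y) ^ θ) * ψ x * ψ y) := by
          apply mul_le_mul_of_nonneg_left _ (by positivity)
          exact mul_le_mul_of_nonneg_right (mul_le_mul_of_nonneg_right hk hψx) hψy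
      _ = ((2:ℝ) ^ (r+1) * kstar) * ((x * ψ x) * (y ^ r * (1 + a y) ^ θ * ψ y)) := by
          ring
  -- now the integral estimate
  set c : ℝ≥0∞ := ENNReal.ofReal ((2:ℝ) ^ (r+1) * kstar) with hc
  set I : ℝ≥0∞ := ∫⁻ y in Ioi (1:ℝ), ENNReal.ofReal (y ^ r * (1 + a y) ^ θ * ψ y) with hI
  have hC0 : (0:ℝ) ≤ (2:ℝ) ^ (r+1) * kstar := by positivity
  have hgm : Measurable fun y : ℝ => ENNReal.ofReal (y ^ r * (1 + a y) ^ θ * ψ y) :=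
    ENNReal.measurable_ofReal.comp
      (((measurable_id.pow measurable_const).mul ((measurable_const.add ha).pow measurable_const)).mul hψm)
  have hfm : Measurable fun x : ℝ => ENNReal.ofReal (x * ψ x) :=
    ENNReal.measurable_ofReal.comp (measurable_id.mul hψm)
  have step1 : (∫⁻ x in Ioo (0:ℝ) 1, ∫⁻ y in Ioi (1:ℝ),
      ENNReal.ofReal ((wgt r (x + y) - wgt r x - wgt r y) * (k x y * ψ x * ψ y)))
      ≤ ∫⁻ x in Ioo (0:ℝ) 1, (c * ENNReal.ofReal (x * ψ x)) * I := by
    apply setLIntegral_mono ((hfm.const_mul c).mul_const I)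
    intro x hx
    have hxψ : 0 ≤ x * ψ x := mul_nonneg hx.1.le (hψ0 x hx.1)
    calc (∫⁻ y in Ioi (1:ℝ),
          ENNReal.ofReal ((wgt r (x + y) - wgt r x - wgt r y) * (k x y * ψ x * ψ y)))
        ≤ ∫⁻ y in Ioi (1:ℝ), (c * ENNReal.ofReal (x * ψ x)) *
            ENNReal.ofReal (y ^ r * (1 + a y) ^ θ * ψ y) := by
          apply setLIntegral_mono (hgm.const_mul _)
          intro y hy
          calc ENNReal.ofReal ((wgt r (x + y) - wgt r x - wgt r y) * (k x y * ψ x * ψ y))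
              ≤ ENNReal.ofReal (((2:ℝ) ^ (r+1) * kstar) *
                  ((x * ψ x) * (y ^ r * (1 + a y) ^ θ * ψ y))) :=
                ENNReal.ofReal_le_ofReal (key x hx y hy)
            _ = (c * ENNReal.ofReal (x * ψ x)) *
                  ENNReal.ofReal (y ^ r * (1 + a y) ^ θ * ψ y) := by
                rw [ENNReal.ofReal_mul hC0, ENNReal.ofReal_mul hxψ, hc, ← mul_assoc]
      _ = (c * ENNReal.ofReal (x * ψ x)) * I := lintegral_const_mul _ hgm
  have step2 : (∫⁻ x in Ioo (0:ℝ) 1, (c * ENNReal.ofReal (x * ψ x)) * I)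
      = (c * I) * ∫⁻ x in Ioo (0:ℝ) 1, ENNReal.ofReal (x * ψ x) := by
    have he : ∀ x : ℝ, (c * ENNReal.ofReal (x * ψ x)) * I
        = (c * I) * ENNReal.ofReal (x * ψ x) := fun x => mul_right_comm _ _ _
    simp_rw [he]
    exact lintegral_const_mul _ hfm
  have step3 : (∫⁻ x in Ioo (0:ℝ) 1, ENNReal.ofReal (x * ψ x))
      ≤ ∫⁻ x in Ioi (0:ℝ), ENNReal.ofReal (x * ψ x) :=
    lintegral_mono_set (fun z hz => hz.1)
  have hcle : c ≤ ENNReal.ofReal ((2:ℝ) ^ (r + 2) * kstar) := by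
    apply ENNReal.ofReal_le_ofReal
    exact mul_le_mul_of_nonneg_right
      (Real.rpow_le_rpow_of_exponent_le (by norm_num) (by linarith)) hkstar.le
  calc (∫⁻ x in Ioo (0:ℝ) 1, ∫⁻ y in Ioi (1:ℝ),
      ENNReal.ofReal ((wgt r (x + y) - wgt r x - wgt r y) * (k x y * ψ x * ψ y)))
      ≤ (c * I) * ∫⁻ x in Ioo (0:ℝ) 1, ENNReal.ofReal (x * ψ x) := by
        rw [← step2]; exact step1
    _ ≤ (c * I) * ∫⁻ x in Ioi (0:ℝ), ENNReal.ofReal (x * ψ x) :=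
        mul_le_mul_right step3 _
    _ ≤ (ENNReal.ofReal ((2:ℝ) ^ (r + 2) * kstar) * I) *
          ∫⁻ x in Ioi (0:ℝ), ENNReal.ofReal (x * ψ x) :=
        mul_le_mul_left (mul_le_mul_left hcle I) _
    _ = ENNReal.ofReal ((2:ℝ) ^ (r + 2) * kstar) *
          (∫⁻ x in Ioi (0:ℝ), ENNReal.ofReal (x * ψ x)) * I := mul_right_comm _ _ _
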